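/- arXiv:2002.02525 — 4 statements merged into one kernel-verified Lean document; each statement's English description precedes it below -/
import Mathlib

section
/- Under the factor model, the effective rank of the covariance satisfies r_e(Σ_X) ≤ K + (1/ξ)·r_e(Σ_E), where Σ_X = AΣ_Z Aᵀ + Σ_E and ξ = λ_K(AΣ_Z Aᵀ)/‖Σ_E‖. -/
open Matrix

/-- The `i`-th largest eigenvalue (0-indexed) of a Hermitian real matrix. -/
noncomputable def eigDesc {n : ℕ} {M : Matrix (Fin n) (Fin n) ℝ} (hM : M.IsHermitian)
    (i : Fin n) : ℝ :=
  (hM.eigenvalues ∘ Tuple.sort hM.eigenvalues) i.rev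

-- trace = sum of eigenvalues
lemma myTrace {n : ℕ} {M : Matrix (Fin n) (Fin n) ℝ} (hM : M.IsHermitian) :
    M.trace = ∑ i, hM.eigenvalues i := by
  nth_rewrite 1 [hM.spectral_theorem]
  rw [Unitary.conjStarAlgAut_apply, Matrix.trace_mul_cycle]
  rw [show (star (hM.eigenvectorUnitary : Matrix (Fin n) (Fin n) ℝ)) *
      (hM.eigenvectorUnitary : Matrix (Fin n) (Fin n) ℝ) = 1 from
    Unitary.coe_star_mul_self _]
  simp [Matrix.trace_diagonal]

-- Rayleigh upper bound
lemma myQuad {n : ℕ} {X : Matrix (Fin n) (Fin n) ℝ} (hX : X.IsHermitian) {c : ℝ}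
    (hc : ∀ i, hX.eigenvalues i ≤ c) (v : Fin n → ℝ) :
    v ⬝ᵥ (X *ᵥ v) ≤ c * (v ⬝ᵥ v) := by
  have hdiag : Matrix.PosSemidef (diagonal (fun i => c - hX.eigenvalues i)) :=
    PosSemidef.diagonal fun i => sub_nonneg.2 (hc i)
  have hU : (hX.eigenvectorUnitary : Matrix (Fin n) (Fin n) ℝ) *
      star (hX.eigenvectorUnitary : Matrix (Fin n) (Fin n) ℝ) = 1 :=
    Unitary.coe_mul_star_self _
  have key : (c • (1 : Matrix (Fin n) (Fin n) ℝ) - X).PosSemidef := by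
    have h2 := hdiag.mul_mul_conjTranspose_same (hX.eigenvectorUnitary : Matrix (Fin n) (Fin n) ℝ)
    rw [← Matrix.star_eq_conjTranspose] at h2
    have h3 : (hX.eigenvectorUnitary : Matrix (Fin n) (Fin n) ℝ) *
        diagonal (fun i => c - hX.eigenvalues i) *
        star (hX.eigenvectorUnitary : Matrix (Fin n) (Fin n) ℝ)
        = c • (1 : Matrix (Fin n) (Fin n) ℝ) - X := by
      have hd : diagonal (fun i => c - hX.eigenvalues i)
          = c • (1 : Matrix (Fin n) (Fin n) ℝ) - diagonal hX.eigenvalues := by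
        ext i j
        by_cases h : i = j <;> simp [h, Matrix.one_apply, diagonal_apply]
      have hof : (RCLike.ofReal ∘ hX.eigenvalues : Fin n → ℝ) = hX.eigenvalues := by
        funext i; simp
      have hst : X = (hX.eigenvectorUnitary : Matrix (Fin n) (Fin n) ℝ) *
          diagonal hX.eigenvalues * star (hX.eigenvectorUnitary : Matrix (Fin n) (Fin n) ℝ) := by
        conv_lhs => rw [hX.spectral_theorem, Unitary.conjStarAlgAut_apply]
        rw [hof]
      rw [hd, Matrix.mul_sub, Matrix.sub_mul, Matrix.mul_smul, Matrix.mul_one, Matrix.smul_mul,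
        hU, ← hst]
    rw [← h3]; exact h2
  have := key.dotProduct_mulVec_nonneg v
  simp only [star_trivial, Matrix.sub_mulVec, Matrix.smul_mulVec, Matrix.one_mulVec,
    dotProduct_sub, dotProduct_smul, smul_eq_mul] at this
  linarith

-- each eigenvalue of M is ≤ c, when all eigenvalues of M+E are ≤ c and E psd
lemma myEigLe {n : ℕ} {M E : Matrix (Fin n) (Fin n) ℝ} (hM : M.IsHermitian)
    (hE : E.PosSemidef) (hX : (M + E).IsHermitian) {c : ℝ}
    (hc : ∀ i, hX.eigenvalues i ≤ c) (j : Fin n) : hM.eigenvalues j ≤ c := by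
  set v : Fin n → ℝ := ⇑(hM.eigenvectorBasis j) with hv
  have h1 : v ⬝ᵥ ((M + E) *ᵥ v) ≤ c * (v ⬝ᵥ v) := myQuad hX hc v
  have hnorm : v ⬝ᵥ v = 1 := by
    have h2 : ‖hM.eigenvectorBasis j‖ = 1 := hM.eigenvectorBasis.orthonormal.1 j
    have h3 : (v ⬝ᵥ v) = inner ℝ (hM.eigenvectorBasis j) (hM.eigenvectorBasis j) := by
      simp only [hv, PiLp.inner_apply, dotProduct, RCLike.inner_apply, conj_trivial]
    rw [h3, real_inner_self_eq_norm_sq, h2]; norm_num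
  have h2 : v ⬝ᵥ (M *ᵥ v) = hM.eigenvalues j := by
    rw [hv, hM.mulVec_eigenvectorBasis, dotProduct_smul, smul_eq_mul, ← hv, hnorm, mul_one]
  have h3 : 0 ≤ v ⬝ᵥ (E *ᵥ v) := by simpa using hE.dotProduct_mulVec_nonneg v
  rw [Matrix.add_mulVec, dotProduct_add, hnorm, mul_one, h2] at h1
  linarith

lemma myEigDescMax {n : ℕ} (hn : 0 < n) {M : Matrix (Fin n) (Fin n) ℝ}
    (hM : M.IsHermitian) (i : Fin n) : hM.eigenvalues i ≤ eigDesc hM ⟨0, hn⟩ := by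
  have hmono := Tuple.monotone_sort hM.eigenvalues
  have h1 : hM.eigenvalues i
      = (hM.eigenvalues ∘ Tuple.sort hM.eigenvalues) ((Tuple.sort hM.eigenvalues).symm i) := by
    simp
  rw [h1]
  exact hmono (by
    rw [Fin.le_def, Fin.val_rev]
    have := ((Tuple.sort hM.eigenvalues).symm i).isLt
    simp only []
    omega)

lemma myEigDescEig {n : ℕ} {M : Matrix (Fin n) (Fin n) ℝ} (hM : M.IsHermitian) (i : Fin n) :
    eigDesc hM i = hM.eigenvalues (Tuple.sort hM.eigenvalues i.rev) := rfl

/-- Under the factor model, `r_e(Σ_X) ≤ K + (1/ξ)·r_e(Σ_E)`, where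
`Σ_X = AΣ_ZAᵀ + Σ_E`, `ξ = λ_K(AΣ_ZAᵀ)/‖Σ_E‖`, `r_e(Q) = tr(Q)/‖Q‖`, and for a
positive semidefinite matrix the operator norm equals the largest eigenvalue. -/
theorem stmt0 {p K : ℕ} (hK : 0 < K) (hKp : K ≤ p)
    (A : Matrix (Fin p) (Fin K) ℝ) (SZ : Matrix (Fin K) (Fin K) ℝ)
    (SE : Matrix (Fin p) (Fin p) ℝ)
    (hSZ : SZ.PosSemidef) (hSE : SE.PosSemidef) (hSEne : SE ≠ 0)
    (hZA : (A * SZ * Aᵀ).IsHermitian)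
    (hX : (A * SZ * Aᵀ + SE).IsHermitian)
    (ξ : ℝ) (hξdef : ξ = eigDesc hZA ⟨K - 1, by omega⟩ / eigDesc hSE.1 ⟨0, by omega⟩)
    (hξpos : 0 < ξ) :
    (A * SZ * Aᵀ + SE).trace / eigDesc hX ⟨0, by omega⟩
      ≤ K + (1 / ξ) * (SE.trace / eigDesc hSE.1 ⟨0, by omega⟩) := by
  have hp : 0 < p := lt_of_lt_of_le hK hKp
  set c : ℝ := eigDesc hX ⟨0, by omega⟩ with hcdef
  set lE : ℝ := eigDesc hSE.1 ⟨0, by omega⟩ with hlEdef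
  set mu : ℝ := eigDesc hZA ⟨K - 1, by omega⟩ with hmudef
  have hc : ∀ i, hX.eigenvalues i ≤ c := fun i => myEigDescMax hp hX i
  -- lE > 0
  have hlEpos : 0 < lE := by
    have hex : ∃ i, hSE.1.eigenvalues i ≠ 0 := by
      by_contra h
      push_neg at h
      apply hSEne
      have hof : (RCLike.ofReal ∘ hSE.1.eigenvalues : Fin p → ℝ) = 0 := by
        funext i; simp [h i]
      rw [hSE.1.spectral_theorem, Unitary.conjStarAlgAut_apply, hof, show (diagonal (0 : Fin p → ℝ)) = 0 from Matrix.diagonal_zero, Matrix.mul_zero, Matrix.zero_mul]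
    obtain ⟨i, hi⟩ := hex
    have h1 : 0 < hSE.1.eigenvalues i := lt_of_le_of_ne (hSE.eigenvalues_nonneg i) (Ne.symm hi)
    exact lt_of_lt_of_le h1 (myEigDescMax hp hSE.1 i)
  -- mu = ξ * lE > 0
  have hmu : mu = ξ * lE := by
    rw [hξdef]
    field_simp
  have hmupos : 0 < mu := by rw [hmu]; positivity
  -- mu ≤ c
  have hmuc : mu ≤ c := by
    rw [hmudef, myEigDescEig]
    exact myEigLe hZA hSE hX hc _
  have hcpos : 0 < c := lt_of_lt_of_le hmupos hmuc
  -- trace bounds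
  have htrM : (A * SZ * Aᵀ).trace ≤ (K : ℝ) * c := by
    rw [myTrace hZA]
    have hrankA : (A * SZ * Aᵀ).rank ≤ K := by
      calc (A * SZ * Aᵀ).rank ≤ (A * SZ).rank := Matrix.rank_mul_le_left _ _
        _ ≤ A.rank := Matrix.rank_mul_le_left _ _
        _ ≤ K := Matrix.rank_le_card_width A |>.trans (by simp)
    have hcard : (Finset.univ.filter fun i => hZA.eigenvalues i ≠ 0).card ≤ K := by
      have := hZA.rank_eq_card_non_zero_eigs
      rw [Fintype.card_subtype] at this
      omega
    have hsum : ∑ i, hZA.eigenvalues i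
        = ∑ i ∈ Finset.univ.filter (fun i => hZA.eigenvalues i ≠ 0), hZA.eigenvalues i :=
      (Finset.sum_filter_ne_zero _).symm
    rw [hsum]
    calc ∑ i ∈ Finset.univ.filter (fun i => hZA.eigenvalues i ≠ 0), hZA.eigenvalues i
        ≤ (Finset.univ.filter fun i => hZA.eigenvalues i ≠ 0).card • c :=
          Finset.sum_le_card_nsmul _ _ c
            (fun i _ => myEigLe hZA hSE hX hc i)
      _ ≤ (K : ℝ) * c := by
          rw [nsmul_eq_mul]
          exact mul_le_mul_of_nonneg_right (by exact_mod_cast hcard) hcpos.le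
  have htrE : 0 ≤ SE.trace := by
    rw [myTrace hSE.1]
    exact Finset.sum_nonneg fun i _ => hSE.eigenvalues_nonneg i
  rw [Matrix.trace_add, add_div]
  have hA1 : (A * SZ * Aᵀ).trace / c ≤ (K : ℝ) := (div_le_iff₀ hcpos).2 htrM
  have hA2 : SE.trace / c ≤ (1 / ξ) * (SE.trace / lE) := by
    have hrhs : (1 / ξ) * (SE.trace / lE) = SE.trace / mu := by
      rw [hmu]; field_simp
    rw [hrhs]
    gcongr
  linarith
end

section
/- If Σ_E = 0 and A, Σ_Z are full rank, the best linear prediction vector is α* = A⁺ᵀβ, and it satisfies ‖α*‖²_{Σ_X} = ‖β‖²_{Σ_Z} and ‖α*‖² = βᵀ(AᵀA)⁻¹β. -/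
open Matrix

/-- `Bp` is the Moore–Penrose pseudoinverse of `B`. -/
def IsMP {m n : ℕ} (B : Matrix (Fin m) (Fin n) ℝ) (Bp : Matrix (Fin n) (Fin m) ℝ) : Prop :=
  B * Bp * B = B ∧ Bp * B * Bp = Bp ∧ (B * Bp)ᵀ = B * Bp ∧ (Bp * B)ᵀ = Bp * B

lemma isUnit_of_rank_eq_card {K : ℕ} (B : Matrix (Fin K) (Fin K) ℝ) (h : B.rank = K) :
    IsUnit B := by
  rw [← mulVec_surjective_iff_isUnit]
  have hr : LinearMap.range B.mulVecLin = ⊤ := by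
    apply Submodule.eq_top_of_finrank_eq
    rw [← Matrix.rank, h, Module.finrank_pi]
    simp
  intro v
  exact LinearMap.range_eq_top.1 hr v

lemma dot_helper {a b : ℕ} (M : Matrix (Fin a) (Fin b) ℝ) (v : Fin a → ℝ) (w : Fin b → ℝ) :
    (Mᵀ *ᵥ v) ⬝ᵥ w = v ⬝ᵥ (M *ᵥ w) := by
  rw [mulVec_transpose, dotProduct_mulVec]

/-- If `Σ_E = 0` and `A`, `Σ_Z` are full rank, the best linear prediction vector is
`α* = Σ_X⁺Σ_{Xy} = A⁺ᵀβ` (with `Σ_X = AΣ_ZAᵀ`, `Σ_{Xy} = AΣ_Zβ`), and it satisfies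
`‖α*‖²_{Σ_X} = ‖β‖²_{Σ_Z}` and `‖α*‖² = βᵀ(AᵀA)⁻¹β`. -/
theorem stmt9 {p K : ℕ}
    (A : Matrix (Fin p) (Fin K) ℝ) (hA : A.rank = K)
    (SZ : Matrix (Fin K) (Fin K) ℝ) (hSZ : SZ.PosDef) (β : Fin K → ℝ)
    (Ap : Matrix (Fin K) (Fin p) ℝ) (hAp : IsMP A Ap)
    (SXp : Matrix (Fin p) (Fin p) ℝ) (hSXp : IsMP (A * SZ * Aᵀ) SXp) :
    SXp *ᵥ (A *ᵥ (SZ *ᵥ β)) = Apᵀ *ᵥ β ∧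
    (Apᵀ *ᵥ β) ⬝ᵥ ((A * SZ * Aᵀ) *ᵥ (Apᵀ *ᵥ β)) = β ⬝ᵥ (SZ *ᵥ β) ∧
    (Apᵀ *ᵥ β) ⬝ᵥ (Apᵀ *ᵥ β) = β ⬝ᵥ ((Aᵀ * A)⁻¹ *ᵥ β) := by
  obtain ⟨hAp1, hAp2, hAp3, hAp4⟩ := hAp
  obtain ⟨hS1, hS2, hS3, hS4⟩ := hSXp
  set S : Matrix (Fin p) (Fin p) ℝ := A * SZ * Aᵀ with hSdef
  -- invertibility facts
  have hAAu : IsUnit (Aᵀ * A).det := by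
    rw [← isUnit_iff_isUnit_det]
    exact isUnit_of_rank_eq_card _ (by rw [rank_transpose_mul_self, hA])
  have hSZu : IsUnit SZ.det := isUnit_iff_ne_zero.2 hSZ.det_pos.ne'
  have hSZsym : SZᵀ = SZ := by
    have := hSZ.1
    simpa [Matrix.IsHermitian, Matrix.conjTranspose_eq_transpose_of_trivial] using this
  -- Aᵀ * A * Ap = Aᵀ
  have key1 : Aᵀ * A * Ap = Aᵀ := by
    calc Aᵀ * A * Ap = Aᵀ * (A * Ap) := by rw [Matrix.mul_assoc]
      _ = Aᵀ * (A * Ap)ᵀ := by rw [hAp3]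
      _ = (A * Ap * A)ᵀ := by simp only [transpose_mul, Matrix.mul_assoc]
      _ = Aᵀ := by rw [hAp1]
  have hApEq : Ap = (Aᵀ * A)⁻¹ * Aᵀ := by
    have := congrArg (fun M => (Aᵀ * A)⁻¹ * M) key1
    simpa [← Matrix.mul_assoc, Matrix.nonsing_inv_mul _ hAAu] using this
  have hinvsym : ((Aᵀ * A)⁻¹)ᵀ = (Aᵀ * A)⁻¹ := by
    rw [transpose_nonsing_inv, transpose_mul, transpose_transpose]
  have hApT : Apᵀ = A * (Aᵀ * A)⁻¹ := by
    rw [hApEq, transpose_mul, hinvsym, transpose_transpose]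
  -- symmetry of S
  have hSsym : Sᵀ = S := by
    rw [hSdef, transpose_mul, transpose_mul, transpose_transpose, hSZsym, Matrix.mul_assoc]
  -- SXp * S * S = S
  have hPS : SXp * S * S = S := by
    calc SXp * S * S = (SXp * S)ᵀ * Sᵀ := by rw [hS4, hSsym]
      _ = (S * (SXp * S))ᵀ := (transpose_mul S (SXp * S)).symm
      _ = (S * SXp * S)ᵀ := by rw [← Matrix.mul_assoc]
      _ = Sᵀ := by rw [hS1]
      _ = S := hSsym
  -- S * Apᵀ = A * SZ
  have hSAp : S * Apᵀ = A * SZ := by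
    rw [hApT, hSdef]
    calc A * SZ * Aᵀ * (A * (Aᵀ * A)⁻¹) = A * SZ * (Aᵀ * A * (Aᵀ * A)⁻¹) := by
          simp only [Matrix.mul_assoc]
      _ = A * SZ := by rw [Matrix.mul_nonsing_inv _ hAAu, Matrix.mul_one]
  -- Apᵀ is in the range of S
  have hApRange : Apᵀ = S * (A * (Aᵀ * A)⁻¹ * SZ⁻¹ * (Aᵀ * A)⁻¹) := by
    rw [hSdef, hApT]
    calc A * (Aᵀ * A)⁻¹
        = A * ((SZ * SZ⁻¹) * (Aᵀ * A)⁻¹) := by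
          rw [Matrix.mul_nonsing_inv _ hSZu, Matrix.one_mul]
      _ = A * (SZ * ((Aᵀ * A) * (Aᵀ * A)⁻¹) * SZ⁻¹ * (Aᵀ * A)⁻¹) := by
          rw [Matrix.mul_nonsing_inv _ hAAu, Matrix.mul_one]
      _ = A * SZ * Aᵀ * (A * (Aᵀ * A)⁻¹ * SZ⁻¹ * (Aᵀ * A)⁻¹) := by
          simp only [Matrix.mul_assoc]
  -- main matrix identity for part 1
  have hM1 : SXp * (A * SZ) = Apᵀ := by
    calc SXp * (A * SZ) = SXp * (S * Apᵀ) := by rw [hSAp]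
      _ = SXp * (S * (S * (A * (Aᵀ * A)⁻¹ * SZ⁻¹ * (Aᵀ * A)⁻¹))) := by rw [← hApRange]
      _ = SXp * S * S * (A * (Aᵀ * A)⁻¹ * SZ⁻¹ * (Aᵀ * A)⁻¹) := by simp only [Matrix.mul_assoc]
      _ = S * (A * (Aᵀ * A)⁻¹ * SZ⁻¹ * (Aᵀ * A)⁻¹) := by rw [hPS]
      _ = Apᵀ := hApRange.symm
  -- identity for part 2 : Ap * S * Apᵀ = SZ
  have hM2 : Ap * (S * Apᵀ) = SZ := by
    rw [hSAp, hApEq]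
    calc (Aᵀ * A)⁻¹ * Aᵀ * (A * SZ) = (Aᵀ * A)⁻¹ * (Aᵀ * A) * SZ := by
          simp only [Matrix.mul_assoc]
      _ = SZ := by rw [Matrix.nonsing_inv_mul _ hAAu, Matrix.one_mul]
  -- identity for part 3 : Ap * Apᵀ = (Aᵀ A)⁻¹
  have e1 : Aᵀ * Apᵀ = 1 := by
    rw [hApT, ← Matrix.mul_assoc, Matrix.mul_nonsing_inv _ hAAu]
  have e2 : Ap * A = 1 := by
    rw [hApEq, Matrix.mul_assoc, Matrix.nonsing_inv_mul _ hAAu]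
  have hM3 : Ap * Apᵀ = (Aᵀ * A)⁻¹ := by
    rw [hApT, hApEq]
    calc (Aᵀ * A)⁻¹ * Aᵀ * (A * (Aᵀ * A)⁻¹) = (Aᵀ * A)⁻¹ * (Aᵀ * A) * (Aᵀ * A)⁻¹ := by
          simp only [Matrix.mul_assoc]
      _ = (Aᵀ * A)⁻¹ := by rw [Matrix.nonsing_inv_mul _ hAAu, Matrix.one_mul]
  refine ⟨?_, ?_, ?_⟩
  · rw [mulVec_mulVec, mulVec_mulVec, Matrix.mul_assoc, hM1]
  · rw [dot_helper, mulVec_mulVec, mulVec_mulVec, Matrix.mul_assoc Ap S Apᵀ, hM2]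
  · rw [dot_helper, mulVec_mulVec, hM3]
end

section
/- Under the factor regression model with A, Σ_Z, Σ_E full rank, the best linear predictor satisfies ‖α*‖²_{Σ_X} = ‖β‖²_{Σ_Z} − β̄ᵀḠ⁻¹β̄, where β̄ = Σ_Z^{1/2}β, Ā = AΣ_Z^{1/2}, and Ḡ = I_K + ĀᵀΣ_E⁻¹Ā; consequently (1 − ξ⁻¹)·‖β‖²_{Σ_Z} ≤ ‖α*‖²_{Σ_X} ≤ ‖β‖²_{Σ_Z} whenever ξ = λ_K(AΣ_ZAᵀ)/‖Σ_E‖ > 1. -/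
open Matrix

/-- The square root of a positive semidefinite matrix (definition from the older Mathlib,
where `Matrix.PosSemidef.sqrt` was part of the library). -/
noncomputable def Matrix.PosSemidef.sqrt {n : Type*} [Fintype n] [DecidableEq n]
    {A : Matrix n n ℝ} (hA : A.PosSemidef) : Matrix n n ℝ :=
  hA.1.eigenvectorUnitary.1 * diagonal ((↑) ∘ Real.sqrt ∘ hA.1.eigenvalues) *
    (star hA.1.eigenvectorUnitary : Matrix n n ℝ)

private lemma psd_sqrt_mul_self {n : Type*} [Fintype n] [DecidableEq n]
    {A : Matrix n n ℝ} (hA : A.PosSemidef) : hA.sqrt * hA.sqrt = A := by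
  unfold Matrix.PosSemidef.sqrt
  have hU : (star hA.1.eigenvectorUnitary : Matrix n n ℝ) * hA.1.eigenvectorUnitary = 1 :=
    Unitary.coe_star_mul_self _
  conv_rhs => rw [hA.1.spectral_theorem, Unitary.conjStarAlgAut_apply]
  simp only [Matrix.mul_assoc]
  rw [← Matrix.mul_assoc (star _ : Matrix n n ℝ) (hA.1.eigenvectorUnitary : Matrix n n ℝ), hU,
    Matrix.one_mul, ← Matrix.mul_assoc (diagonal _) (diagonal _), diagonal_mul_diagonal]
  congr 2
  · congr 1
    ext i
    simp [Real.mul_self_sqrt (hA.eigenvalues_nonneg i)]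

private lemma psd_sqrt_herm {n : Type*} [Fintype n] [DecidableEq n]
    {A : Matrix n n ℝ} (hA : A.PosSemidef) : hA.sqrt.IsHermitian := by
  unfold Matrix.PosSemidef.sqrt
  simp [Matrix.IsHermitian, Matrix.conjTranspose_mul, Matrix.mul_assoc, Unitary.coe_star,
    Matrix.star_eq_conjTranspose, Matrix.conjTranspose_eq_transpose_of_trivial]


private lemma real_conjT {m n : ℕ} (M : Matrix (Fin m) (Fin n) ℝ) : Mᴴ = Mᵀ := by
  ext i j; simp [conjTranspose_apply]

private lemma star_transpose_real {n : ℕ} (U : Matrix (Fin n) (Fin n) ℝ) : Uᵀ = star U := by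
  rw [Matrix.star_eq_conjTranspose]
  ext i j
  simp [conjTranspose_apply]

private lemma quad_decomp {n : ℕ} {M : Matrix (Fin n) (Fin n) ℝ} (hM : M.IsHermitian)
    (x : Fin n → ℝ) :
    ∃ y : Fin n → ℝ, (x ⬝ᵥ x = ∑ i, y i ^ 2) ∧
      x ⬝ᵥ (M *ᵥ x) = ∑ i, hM.eigenvalues i * y i ^ 2 := by
  classical
  set U : Matrix (Fin n) (Fin n) ℝ := (hM.eigenvectorUnitary : Matrix (Fin n) (Fin n) ℝ) with hUdef
  have hU1 : U * star U = 1 := (Matrix.mem_unitaryGroup_iff).mp hM.eigenvectorUnitary.2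
  have hU2 : star U * U = 1 := (Matrix.mem_unitaryGroup_iff').mp hM.eigenvectorUnitary.2
  set D : Matrix (Fin n) (Fin n) ℝ := diagonal (RCLike.ofReal ∘ hM.eigenvalues) with hD
  set y : Fin n → ℝ := star U *ᵥ x with hy
  have hx : U *ᵥ y = x := by rw [hy, mulVec_mulVec, hU1, one_mulVec]
  have hvm : ∀ v : Fin n → ℝ, (U *ᵥ v) ᵥ* U = v := by
    intro v
    rw [← mulVec_transpose, star_transpose_real, mulVec_mulVec, hU2, one_mulVec]
  refine ⟨y, ?_, ?_⟩
  · calc x ⬝ᵥ x = (U *ᵥ y) ⬝ᵥ (U *ᵥ y) := by rw [hx]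
    _ = y ⬝ᵥ y := by rw [dotProduct_mulVec, hvm]
    _ = ∑ i, y i ^ 2 := by simp [dotProduct, sq]
  · have hMx : M *ᵥ x = U *ᵥ (D *ᵥ y) := by
      conv_lhs => rw [hM.spectral_theorem, Unitary.conjStarAlgAut_apply]
      rw [← hD, ← mulVec_mulVec, ← mulVec_mulVec, ← hy]
    calc x ⬝ᵥ (M *ᵥ x) = (U *ᵥ y) ⬝ᵥ (U *ᵥ (D *ᵥ y)) := by rw [hMx, hx]
    _ = y ⬝ᵥ (D *ᵥ y) := by rw [dotProduct_mulVec, hvm]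
    _ = ∑ i, hM.eigenvalues i * y i ^ 2 := by
          simp [dotProduct, hD, mulVec_diagonal, sq]
          exact Finset.sum_congr rfl fun i _ => by ring


private lemma quad_ge {n : ℕ} {M : Matrix (Fin n) (Fin n) ℝ} (hM : M.IsHermitian)
    {c : ℝ} (h : ∀ i, c ≤ hM.eigenvalues i) (x : Fin n → ℝ) :
    c * (x ⬝ᵥ x) ≤ x ⬝ᵥ (M *ᵥ x) := by
  obtain ⟨y, h1, h2⟩ := quad_decomp hM x
  rw [h1, h2, Finset.mul_sum]
  exact Finset.sum_le_sum fun i _ => mul_le_mul_of_nonneg_right (h i) (sq_nonneg _)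

private lemma quad_le {n : ℕ} {M : Matrix (Fin n) (Fin n) ℝ} (hM : M.IsHermitian)
    {c : ℝ} (h : ∀ i, hM.eigenvalues i ≤ c) (x : Fin n → ℝ) :
    x ⬝ᵥ (M *ᵥ x) ≤ c * (x ⬝ᵥ x) := by
  obtain ⟨y, h1, h2⟩ := quad_decomp hM x
  rw [h1, h2, Finset.mul_sum]
  exact Finset.sum_le_sum fun i _ => mul_le_mul_of_nonneg_right (h i) (sq_nonneg _)

private lemma eig_mem {n : ℕ} {M : Matrix (Fin n) (Fin n) ℝ} (hM : M.IsHermitian)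
    {c : ℝ} {v : Fin n → ℝ} (hv : v ≠ 0) (hMv : M *ᵥ v = c • v) :
    ∃ i, hM.eigenvalues i = c := by
  classical
  have hdet : (M - c • (1 : Matrix (Fin n) (Fin n) ℝ)).det = 0 := by
    rw [← Matrix.exists_mulVec_eq_zero_iff]
    exact ⟨v, hv, by rw [Matrix.sub_mulVec, hMv, smul_mulVec, one_mulVec, sub_self]⟩
  set U : Matrix (Fin n) (Fin n) ℝ := (hM.eigenvectorUnitary : Matrix (Fin n) (Fin n) ℝ)
  have hU1 : U * star U = 1 := (Matrix.mem_unitaryGroup_iff).mp hM.eigenvectorUnitary.2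
  have hsp : M - c • 1 = U * (diagonal (fun i => hM.eigenvalues i - c)) * star U := by
    have h1 : U * (c • (1 : Matrix (Fin n) (Fin n) ℝ)) * star U = c • 1 := by
      rw [Matrix.mul_smul, Matrix.mul_one, Matrix.smul_mul, hU1]
    have h2 : M = U * (diagonal (RCLike.ofReal ∘ hM.eigenvalues)) * star U :=
      hM.spectral_theorem
    have h3 : diagonal (fun i => hM.eigenvalues i - c)
        = diagonal (RCLike.ofReal ∘ hM.eigenvalues) - c • (1 : Matrix (Fin n) (Fin n) ℝ) := by
      rw [Matrix.smul_one_eq_diagonal, ← diagonal_sub]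
      congr 1
    rw [h3, Matrix.mul_sub, Matrix.sub_mul, ← h2, h1]
  have : (diagonal (fun i => hM.eigenvalues i - c)).det = 0 := by
    have := hdet
    rw [hsp, Matrix.det_mul, Matrix.det_mul] at this
    have hUdet : U.det * (star U).det = 1 := by rw [← Matrix.det_mul, hU1, Matrix.det_one]
    nlinarith [this, hUdet]
  rw [Matrix.det_diagonal] at this
  obtain ⟨i, _, hi⟩ := Finset.prod_eq_zero_iff.mp this
  exact ⟨i, by linarith [sub_eq_zero.mp hi]⟩

private lemma star_transpose_real' {n : ℕ} (U : Matrix (Fin n) (Fin n) ℝ) : Uᵀ = star U := by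
  rw [Matrix.star_eq_conjTranspose]; ext i j; simp [conjTranspose_apply]

private lemma dot_CS {n : ℕ} (u v : Fin n → ℝ) :
    (u ⬝ᵥ v) ^ 2 ≤ (u ⬝ᵥ u) * (v ⬝ᵥ v) := by
  simpa [dotProduct, sq] using Finset.sum_mul_sq_le_sq_mul_sq Finset.univ u v

private lemma psd_CS {n : ℕ} {M : Matrix (Fin n) (Fin n) ℝ} (hM : M.PosSemidef)
    (u v : Fin n → ℝ) :
    (u ⬝ᵥ (M *ᵥ v)) ^ 2 ≤ (u ⬝ᵥ (M *ᵥ u)) * (v ⬝ᵥ (M *ᵥ v)) := by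
  set R := hM.sqrt with hR
  have hRR : R * R = M := psd_sqrt_mul_self hM
  have hRH : Rᵀ = R := by
    rw [star_transpose_real']; exact psd_sqrt_herm hM
  have key : ∀ a b : Fin n → ℝ, a ⬝ᵥ (M *ᵥ b) = (R *ᵥ a) ⬝ᵥ (R *ᵥ b) := by
    intro a b
    calc a ⬝ᵥ (M *ᵥ b) = a ⬝ᵥ (R *ᵥ (R *ᵥ b)) := by rw [mulVec_mulVec, hRR]
    _ = (a ᵥ* R) ⬝ᵥ (R *ᵥ b) := dotProduct_mulVec _ _ _
    _ = (R *ᵥ a) ⬝ᵥ (R *ᵥ b) := by nth_rewrite 1 [← hRH]; rw [vecMul_transpose]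
  rw [key u v, key u u, key v v]
  exact dot_CS _ _


private lemma dot_self_nonneg {n : ℕ} (x : Fin n → ℝ) : 0 ≤ x ⬝ᵥ x :=
  Finset.sum_nonneg fun i _ => mul_self_nonneg _

private lemma psd_dot_nonneg {n : ℕ} {M : Matrix (Fin n) (Fin n) ℝ} (hM : M.PosSemidef)
    (x : Fin n → ℝ) : 0 ≤ x ⬝ᵥ (M *ᵥ x) := by
  have := hM.dotProduct_mulVec_nonneg x
  simpa using this

private lemma posdef_mul_inv {n : ℕ} {M : Matrix (Fin n) (Fin n) ℝ} (hM : M.PosDef) :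
    M * M⁻¹ = 1 :=
  Matrix.mul_nonsing_inv M (isUnit_iff_ne_zero.mpr hM.det_pos.ne')

private lemma inv_quad_upper {n : ℕ} {M : Matrix (Fin n) (Fin n) ℝ} (hM : M.PosDef)
    {c : ℝ} (hc : 0 < c) (h : ∀ x, c * (x ⬝ᵥ x) ≤ x ⬝ᵥ (M *ᵥ x)) (x : Fin n → ℝ) :
    x ⬝ᵥ (M⁻¹ *ᵥ x) ≤ c⁻¹ * (x ⬝ᵥ x) := by
  set y := M⁻¹ *ᵥ x with hy
  have hx : M *ᵥ y = x := by rw [hy, mulVec_mulVec, posdef_mul_inv hM, one_mulVec]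
  have h1 : c * (y ⬝ᵥ y) ≤ x ⬝ᵥ y := by
    have := h y; rw [hx] at this; rw [dotProduct_comm x y]; exact this
  have h2 : (x ⬝ᵥ y) ^ 2 ≤ (x ⬝ᵥ x) * (y ⬝ᵥ y) := dot_CS x y
  have hq := dot_self_nonneg y
  have hr := dot_self_nonneg x
  rw [show c⁻¹ * (x ⬝ᵥ x) = (x ⬝ᵥ x) / c from by ring, le_div_iff₀ hc]
  nlinarith [mul_le_mul_of_nonneg_left h1 hr, mul_le_mul_of_nonneg_left h2 hc.le,
    mul_nonneg hq hc.le, sq_nonneg (x ⬝ᵥ y)]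

private lemma inv_quad_lower {n : ℕ} {M : Matrix (Fin n) (Fin n) ℝ} (hM : M.PosDef)
    {c : ℝ} (hc : 0 < c) (h : ∀ x, x ⬝ᵥ (M *ᵥ x) ≤ c * (x ⬝ᵥ x)) (x : Fin n → ℝ) :
    c⁻¹ * (x ⬝ᵥ x) ≤ x ⬝ᵥ (M⁻¹ *ᵥ x) := by
  set y := M⁻¹ *ᵥ x with hy
  have hx : M *ᵥ y = x := by rw [hy, mulVec_mulVec, posdef_mul_inv hM, one_mulVec]
  have h0 : x ⬝ᵥ (M *ᵥ y) = x ⬝ᵥ x := by rw [hx]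
  have h2 := psd_CS hM.posSemidef x y
  rw [h0] at h2
  have h3 : y ⬝ᵥ (M *ᵥ y) = x ⬝ᵥ y := by
    rw [hx]  -- y ⬝ᵥ x = x ⬝ᵥ y?
    exact dotProduct_comm y x
  rw [h3] at h2
  have h4 : x ⬝ᵥ (M *ᵥ x) ≤ c * (x ⬝ᵥ x) := h x
  have hs : 0 ≤ x ⬝ᵥ y := by
    have := psd_dot_nonneg hM.posSemidef y; rw [h3] at this; exact this
  have hr := dot_self_nonneg x
  rw [show c⁻¹ * (x ⬝ᵥ x) = (x ⬝ᵥ x) / c from by ring, div_le_iff₀ hc]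
  rcases eq_or_lt_of_le hr with h0r | h0r
  · rw [← h0r]; exact mul_nonneg hs hc.le
  · nlinarith [mul_le_mul_of_nonneg_right h4 hs, h2, h0r]

private lemma sorted_max {n : ℕ} (f : Fin n → ℝ) (i : Fin n) (j : Fin n) (hj : j.val = n - 1) :
    f i ≤ (f ∘ Tuple.sort f) j := by
  have h1 : f i = (f ∘ Tuple.sort f) ((Tuple.sort f)⁻¹ i) := by simp
  rw [h1]
  apply Tuple.monotone_sort f
  have := ((Tuple.sort f)⁻¹ i).isLt
  exact Fin.le_def.mpr (by omega)

private lemma sorted_min_nonzero {n K : ℕ} (hK : 0 < K) (hKp : K ≤ n)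
    {W : Matrix (Fin n) (Fin n) ℝ} (hW : W.IsHermitian)
    (hrank : Fintype.card {i // hW.eigenvalues i ≠ 0} = K)
    {c : ℝ} (hcpos : 0 < c) (hc : ∃ i, hW.eigenvalues i = c) :
    (hW.eigenvalues ∘ Tuple.sort hW.eigenvalues) ⟨n - K, by omega⟩ ≤ c := by
  classical
  set ev := hW.eigenvalues with hev
  set σ := Tuple.sort ev with hσ
  set g : Fin n → ℝ := ev ∘ σ with hg
  by_contra hlt
  push_neg at hlt
  have hmono : Monotone g := Tuple.monotone_sort ev
  have hcardg : Fintype.card {i // g i ≠ 0} = K := by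
    rw [← hrank]
    exact Fintype.card_congr (Equiv.subtypeEquiv σ (fun i => Iff.rfl))
  set Sset : Finset (Fin n) := Finset.univ.filter (fun j => n - K ≤ j.val) with hS
  set Nset : Finset (Fin n) := Finset.univ.filter (fun j => g j ≠ 0) with hN
  have hNcard : Nset.card = K := by
    rw [hN, ← hcardg]
    exact (Fintype.card_subtype _).symm
  have hgt : ∀ j : Fin n, n - K ≤ j.val → c < g j := by
    intro j hj
    exact lt_of_lt_of_le hlt (hmono (Fin.le_def.mpr (by simpa using hj)))
  have hsub : Sset ⊆ Nset := by
    intro j hj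
    rw [hS, Finset.mem_filter] at hj
    rw [hN, Finset.mem_filter]
    have := hgt j hj.2
    exact ⟨Finset.mem_univ _, by intro h0; rw [h0] at this; linarith⟩
  have hScard : Sset.card = K := by
    have himg : Sset = Finset.image (fun i : Fin K => (⟨n - K + i.val, by omega⟩ : Fin n))
        Finset.univ := by
      ext j
      simp only [hS, Finset.mem_filter, Finset.mem_univ, true_and, Finset.mem_image]
      constructor
      · intro hj
        exact ⟨⟨j.val - (n - K), by omega⟩, by apply Fin.ext; simp; omega⟩
      · rintro ⟨i, rfl⟩
        simp
    rw [himg, Finset.card_image_of_injective _ (fun a b hab => by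
      apply Fin.ext
      have := congrArg Fin.val hab
      simp at this
      omega), Finset.card_univ, Fintype.card_fin]
  have heq : Sset = Nset :=
    Finset.eq_of_subset_of_card_le hsub (by rw [hNcard, hScard])
  obtain ⟨i0, hi0⟩ := hc
  have hmem : σ⁻¹ i0 ∈ Nset := by
    rw [hN, Finset.mem_filter]
    have : g (σ⁻¹ i0) = c := by
      rw [hg]; simp [Function.comp]; exact hi0
    exact ⟨Finset.mem_univ _, by rw [this]; exact hcpos.ne'⟩
  rw [← heq, hS, Finset.mem_filter] at hmem
  have hc2 : c < g (σ⁻¹ i0) := hgt _ hmem.2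
  have : g (σ⁻¹ i0) = c := by
    rw [hg]; simp [Function.comp]; exact hi0
  linarith

set_option maxHeartbeats 1000000 in
/-- With `A`, `Σ_Z`, `Σ_E` full rank, the best linear predictor `α* = Σ_X⁻¹AΣ_Zβ`
satisfies `‖α*‖²_{Σ_X} = ‖β‖²_{Σ_Z} − β̄ᵀḠ⁻¹β̄`, where `β̄ = Σ_Z^{1/2}β`,
`Ā = AΣ_Z^{1/2}`, `Ḡ = I_K + ĀᵀΣ_E⁻¹Ā`; consequently
`(1 − ξ⁻¹)·‖β‖²_{Σ_Z} ≤ ‖α*‖²_{Σ_X} ≤ ‖β‖²_{Σ_Z}` whenever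
`ξ = λ_K(AΣ_ZAᵀ)/‖Σ_E‖ > 1` (for a PSD matrix the operator norm is its largest
eigenvalue). -/
theorem stmt10 {p K : ℕ} (hK : 0 < K) (hKp : K ≤ p)
    (A : Matrix (Fin p) (Fin K) ℝ) (hA : A.rank = K)
    {SZ : Matrix (Fin K) (Fin K) ℝ} (hSZ : SZ.PosDef)
    {SE : Matrix (Fin p) (Fin p) ℝ} (hSE : SE.PosDef)
    (β : Fin K → ℝ)
    (hZA : (A * SZ * Aᵀ).IsHermitian)
    (ξ : ℝ) (hξ : ξ = eigDesc hZA ⟨K - 1, by omega⟩ / eigDesc hSE.1 ⟨0, by omega⟩)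
    (αstar : Fin p → ℝ)
    (hαstar : αstar = (A * SZ * Aᵀ + SE)⁻¹ *ᵥ (A *ᵥ (SZ *ᵥ β))) :
    αstar ⬝ᵥ ((A * SZ * Aᵀ + SE) *ᵥ αstar)
      = β ⬝ᵥ (SZ *ᵥ β) -
        (hSZ.posSemidef.sqrt *ᵥ β) ⬝ᵥ
          (((1 : Matrix (Fin K) (Fin K) ℝ) +
              (A * hSZ.posSemidef.sqrt)ᵀ * SE⁻¹ * (A * hSZ.posSemidef.sqrt))⁻¹ *ᵥ
            (hSZ.posSemidef.sqrt *ᵥ β)) ∧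
    (1 < ξ →
      (1 - ξ⁻¹) * (β ⬝ᵥ (SZ *ᵥ β)) ≤ αstar ⬝ᵥ ((A * SZ * Aᵀ + SE) *ᵥ αstar) ∧
      αstar ⬝ᵥ ((A * SZ * Aᵀ + SE) *ᵥ αstar) ≤ β ⬝ᵥ (SZ *ᵥ β)) := by
  classical
  set S : Matrix (Fin K) (Fin K) ℝ := hSZ.posSemidef.sqrt with hSdef
  have hSS : S * S = SZ := psd_sqrt_mul_self hSZ.posSemidef
  have hSH : Sᵀ = S := by
    rw [← real_conjT]; exact psd_sqrt_herm hSZ.posSemidef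
  set Ab : Matrix (Fin p) (Fin K) ℝ := A * S with hAbdef
  set N : Matrix (Fin K) (Fin K) ℝ := Abᵀ * SE⁻¹ * Ab with hNdef
  set G : Matrix (Fin K) (Fin K) ℝ := 1 + N with hGdef
  set SX : Matrix (Fin p) (Fin p) ℝ := A * SZ * Aᵀ + SE with hSXdef
  -- basic invertibility facts
  have hdetS : IsUnit S.det := by
    have h1 : S.det * S.det = SZ.det := by rw [← Matrix.det_mul, hSS]
    have h2 := hSZ.det_pos
    exact isUnit_iff_ne_zero.mpr (fun h => by rw [h, mul_zero] at h1; linarith)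
  have hAbrank : Ab.rank = K := by
    rw [hAbdef, Matrix.rank_mul_eq_left_of_isUnit_det S A hdetS, hA]
  have hker : ∀ x : Fin K → ℝ, Ab *ᵥ x = 0 → x = 0 := by
    intro x hx
    have h1 := LinearMap.finrank_range_add_finrank_ker (Matrix.mulVecLin Ab)
    have h2 : Module.finrank ℝ (LinearMap.range (Matrix.mulVecLin Ab)) = K := hAbrank
    have h3 : Module.finrank ℝ (Fin K → ℝ) = K := by
      rw [Module.finrank_fintype_fun_eq_card, Fintype.card_fin]
    have h4 : Module.finrank ℝ (LinearMap.ker (Matrix.mulVecLin Ab)) = 0 := by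
      rw [h3] at h1; omega
    have h5 : LinearMap.ker (Matrix.mulVecLin Ab) = ⊥ := Submodule.finrank_eq_zero.mp h4
    have h6 : x ∈ LinearMap.ker (Matrix.mulVecLin Ab) := by
      rw [LinearMap.mem_ker]; exact hx
    rw [h5] at h6
    simpa using h6
  have hWfact : A * SZ * Aᵀ = Ab * Abᵀ := by
    rw [hAbdef, Matrix.transpose_mul, hSH, ← hSS]
    simp [Matrix.mul_assoc]
  have hWpsd : (A * SZ * Aᵀ).PosSemidef := by
    rw [hWfact, ← real_conjT]
    exact Matrix.posSemidef_self_mul_conjTranspose Ab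
  have hSXpd : SX.PosDef := Matrix.PosDef.posSemidef_add hWpsd hSE
  have hSEipd : SE⁻¹.PosDef := hSE.inv
  have hNpsd : N.PosSemidef := by
    rw [hNdef, ← real_conjT]
    exact hSEipd.posSemidef.conjTranspose_mul_mul_same Ab
  have hGpd : G.PosDef := Matrix.PosDef.add_posSemidef (Matrix.PosDef.one) hNpsd
  have hG1 : G * G⁻¹ = 1 := posdef_mul_inv hGpd
  have hG2 : G⁻¹ * G = 1 := Matrix.nonsing_inv_mul G (isUnit_iff_ne_zero.mpr hGpd.det_pos.ne')
  have hSE1 : SE * SE⁻¹ = 1 := posdef_mul_inv hSE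
  have hSX1 : SX * SX⁻¹ = 1 := posdef_mul_inv hSXpd
  -- Woodbury
  have hMN : Abᵀ * (SE⁻¹ * Ab) = G - 1 := by
    rw [hGdef, hNdef, ← Matrix.mul_assoc]; abel
  have hwood : SX⁻¹ = SE⁻¹ - SE⁻¹ * Ab * G⁻¹ * (Abᵀ * SE⁻¹) := by
    apply Matrix.inv_eq_right_inv
    rw [hSXdef, hWfact]
    have expand : (Ab * Abᵀ + SE) * (SE⁻¹ - SE⁻¹ * Ab * G⁻¹ * (Abᵀ * SE⁻¹))
        = Ab * (Abᵀ * SE⁻¹) - Ab * ((Abᵀ * (SE⁻¹ * Ab)) * (G⁻¹ * (Abᵀ * SE⁻¹)))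
          + (SE * SE⁻¹ - SE * SE⁻¹ * (Ab * (G⁻¹ * (Abᵀ * SE⁻¹)))) := by
      simp only [Matrix.add_mul, Matrix.mul_sub, Matrix.mul_assoc]
      abel
    rw [expand, hMN, hSE1, Matrix.sub_mul, Matrix.one_mul,
      ← Matrix.mul_assoc G, hG1, Matrix.one_mul, Matrix.mul_sub, Matrix.one_mul]
    abel
  -- key identity
  have hkey : Abᵀ * SX⁻¹ * Ab = 1 - G⁻¹ := by
    rw [hwood]
    have expand : Abᵀ * (SE⁻¹ - SE⁻¹ * Ab * G⁻¹ * (Abᵀ * SE⁻¹)) * Ab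
        = Abᵀ * (SE⁻¹ * Ab) - (Abᵀ * (SE⁻¹ * Ab)) * (G⁻¹ * (Abᵀ * (SE⁻¹ * Ab))) := by
      simp only [Matrix.mul_sub, Matrix.sub_mul, Matrix.mul_assoc]
    have e1 : G⁻¹ * (G - 1) = 1 - G⁻¹ := by rw [Matrix.mul_sub, hG2, Matrix.mul_one]
    rw [expand, hMN, e1, Matrix.sub_mul, Matrix.mul_sub, Matrix.mul_sub, hG1,
      Matrix.mul_one, Matrix.one_mul, Matrix.one_mul]
    abel
  -- value computation
  set bb : Fin K → ℝ := S *ᵥ β with hbb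
  have hαv : αstar = SX⁻¹ *ᵥ (Ab *ᵥ bb) := by
    have hvec : A *ᵥ (SZ *ᵥ β) = Ab *ᵥ (S *ᵥ β) := by
      rw [mulVec_mulVec, mulVec_mulVec, hAbdef, Matrix.mul_assoc, hSS]
    rw [hαstar, hbb, hvec]
  have hcc : β ⬝ᵥ (SZ *ᵥ β) = bb ⬝ᵥ bb := by
    rw [hbb]
    calc β ⬝ᵥ (SZ *ᵥ β) = β ⬝ᵥ ((Sᵀ * S) *ᵥ β) := by rw [hSH, hSS]
    _ = β ⬝ᵥ (Sᵀ *ᵥ (S *ᵥ β)) := by rw [mulVec_mulVec]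
    _ = (β ᵥ* Sᵀ) ⬝ᵥ (S *ᵥ β) := dotProduct_mulVec β Sᵀ _
    _ = (S *ᵥ β) ⬝ᵥ (S *ᵥ β) := by rw [vecMul_transpose]
  have hval : αstar ⬝ᵥ (SX *ᵥ αstar) = β ⬝ᵥ (SZ *ᵥ β) - bb ⬝ᵥ (G⁻¹ *ᵥ bb) := by
    have hSXα : SX *ᵥ αstar = Ab *ᵥ bb := by
      rw [hαv, mulVec_mulVec, hSX1, one_mulVec]
    have h7 : αstar ⬝ᵥ (SX *ᵥ αstar) = bb ⬝ᵥ ((Abᵀ * SX⁻¹ * Ab) *ᵥ bb) := by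
      rw [hSXα, hαv]
      calc (SX⁻¹ *ᵥ (Ab *ᵥ bb)) ⬝ᵥ (Ab *ᵥ bb)
          = (Ab *ᵥ bb) ⬝ᵥ (SX⁻¹ *ᵥ (Ab *ᵥ bb)) := dotProduct_comm _ _
        _ = (bb ᵥ* Abᵀ) ⬝ᵥ (SX⁻¹ *ᵥ (Ab *ᵥ bb)) := by rw [vecMul_transpose]
        _ = bb ⬝ᵥ (Abᵀ *ᵥ (SX⁻¹ *ᵥ (Ab *ᵥ bb))) := (dotProduct_mulVec bb Abᵀ _).symm
        _ = bb ⬝ᵥ ((Abᵀ * SX⁻¹ * Ab) *ᵥ bb) := by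
            rw [mulVec_mulVec, mulVec_mulVec, Matrix.mul_assoc]
    rw [h7, hkey, Matrix.sub_mulVec, dotProduct_sub, one_mulVec, hcc]
  refine ⟨hval, ?_⟩
  intro hξ1
  have ht0 : 0 ≤ bb ⬝ᵥ (G⁻¹ *ᵥ bb) := psd_dot_nonneg hGpd.inv.posSemidef bb
  -- eigenvalue facts
  have hrankW : Fintype.card {i // hZA.eigenvalues i ≠ 0} = K := by
    rw [← Matrix.IsHermitian.rank_eq_card_non_zero_eigs hZA, hWfact,
      Matrix.rank_self_mul_transpose, hAbrank]
  have hub : ∀ i, hSE.1.eigenvalues i ≤ eigDesc hSE.1 ⟨0, by omega⟩ := by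
    intro i
    exact sorted_max hSE.1.eigenvalues i (Fin.rev ⟨0, by omega⟩) (by simp)
  have hlmax_pos : 0 < eigDesc hSE.1 ⟨0, by omega⟩ :=
    hSE.eigenvalues_pos (Tuple.sort hSE.1.eigenvalues (Fin.rev ⟨0, by omega⟩))
  -- min eigenvalue of Nq
  set Nq : Matrix (Fin K) (Fin K) ℝ := Abᵀ * Ab with hNqdef
  have hNqH : Nq.IsHermitian := by
    have := Matrix.isHermitian_conjTranspose_mul_self Ab
    rwa [real_conjT] at this
  have hNqpd : Nq.PosDef := by
    refine Matrix.PosDef.of_dotProduct_mulVec_pos hNqH (fun x hx => ?_)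
    have hsx : star x = x := by simp
    have h1 : x ⬝ᵥ (Nq *ᵥ x) = (Ab *ᵥ x) ⬝ᵥ (Ab *ᵥ x) := by
      rw [hNqdef, ← mulVec_mulVec, dotProduct_mulVec x Abᵀ, vecMul_transpose]
    rw [hsx, h1]
    have h2 : Ab *ᵥ x ≠ 0 := fun h => hx (hker x h)
    rcases lt_or_eq_of_le (dot_self_nonneg (Ab *ᵥ x)) with h | h
    · exact h
    · exact absurd (dotProduct_self_eq_zero.mp h.symm) h2
  obtain ⟨i0, -, hi0min⟩ := Finset.exists_min_image Finset.univ hNqH.eigenvalues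
    ⟨⟨0, hK⟩, Finset.mem_univ _⟩
  set μ : ℝ := hNqH.eigenvalues i0 with hμdef
  have hμmin : ∀ i, μ ≤ hNqH.eigenvalues i := fun i => hi0min i (Finset.mem_univ i)
  have hμpos : 0 < μ := hNqpd.eigenvalues_pos i0
  -- μ is an eigenvalue of A * SZ * Aᵀ
  have hvne : (⇑(hNqH.eigenvectorBasis i0) : Fin K → ℝ) ≠ 0 := by
    intro h
    exact hNqH.eigenvectorBasis.orthonormal.ne_zero i0 (by ext j; exact congrFun h j)
  have hNqv : Nq *ᵥ ⇑(hNqH.eigenvectorBasis i0) = μ • ⇑(hNqH.eigenvectorBasis i0) :=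
    hNqH.mulVec_eigenvectorBasis i0
  have huneq : Ab *ᵥ ⇑(hNqH.eigenvectorBasis i0) ≠ 0 := fun h => hvne (hker _ h)
  have hWu : (A * SZ * Aᵀ) *ᵥ (Ab *ᵥ ⇑(hNqH.eigenvectorBasis i0))
      = μ • (Ab *ᵥ ⇑(hNqH.eigenvectorBasis i0)) := by
    rw [hWfact]
    calc (Ab * Abᵀ) *ᵥ (Ab *ᵥ ⇑(hNqH.eigenvectorBasis i0))
        = Ab *ᵥ ((Abᵀ * Ab) *ᵥ ⇑(hNqH.eigenvectorBasis i0)) := by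
          rw [mulVec_mulVec, Matrix.mul_assoc, ← mulVec_mulVec]
      _ = Ab *ᵥ (μ • ⇑(hNqH.eigenvectorBasis i0)) := by rw [← hNqdef, hNqv]
      _ = μ • (Ab *ᵥ ⇑(hNqH.eigenvectorBasis i0)) := Matrix.mulVec_smul Ab μ _
  have hμmem : ∃ i, hZA.eigenvalues i = μ := eig_mem hZA huneq hWu
  have hlK : eigDesc hZA ⟨K - 1, by omega⟩ ≤ μ := by
    have h := sorted_min_nonzero hK hKp hZA hrankW hμpos hμmem
    have e : (Fin.rev (⟨K - 1, by omega⟩ : Fin p)) = (⟨p - K, by omega⟩ : Fin p) :=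
      Fin.ext (by simp; omega)
    show (hZA.eigenvalues ∘ Tuple.sort hZA.eigenvalues) (Fin.rev ⟨K - 1, by omega⟩) ≤ μ
    rw [e]
    exact h
  have hξpos : 0 < ξ := lt_trans one_pos hξ1
  -- quadratic lower bound for G
  have hGquad : ∀ x : Fin K → ℝ, ξ * (x ⬝ᵥ x) ≤ x ⬝ᵥ (G *ᵥ x) := by
    intro x
    have h1 : x ⬝ᵥ (Nq *ᵥ x) = (Ab *ᵥ x) ⬝ᵥ (Ab *ᵥ x) := by
      rw [hNqdef, ← mulVec_mulVec, dotProduct_mulVec x Abᵀ, vecMul_transpose]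
    have h2 : μ * (x ⬝ᵥ x) ≤ (Ab *ᵥ x) ⬝ᵥ (Ab *ᵥ x) := by
      rw [← h1]; exact quad_ge hNqH hμmin x
    have h3 : x ⬝ᵥ (N *ᵥ x) = (Ab *ᵥ x) ⬝ᵥ (SE⁻¹ *ᵥ (Ab *ᵥ x)) := by
      rw [hNdef, ← mulVec_mulVec, ← mulVec_mulVec, dotProduct_mulVec x Abᵀ, vecMul_transpose]
    have h4 : (eigDesc hSE.1 ⟨0, by omega⟩)⁻¹ * ((Ab *ᵥ x) ⬝ᵥ (Ab *ᵥ x))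
        ≤ (Ab *ᵥ x) ⬝ᵥ (SE⁻¹ *ᵥ (Ab *ᵥ x)) :=
      inv_quad_lower hSE hlmax_pos (quad_le hSE.1 hub) (Ab *ᵥ x)
    have h5 : ξ ≤ (eigDesc hSE.1 ⟨0, by omega⟩)⁻¹ * μ := by
      rw [hξ, div_eq_mul_inv]
      have hi := inv_pos.mpr hlmax_pos
      nlinarith [hlK]
    have h6 : x ⬝ᵥ (G *ᵥ x) = x ⬝ᵥ x + x ⬝ᵥ (N *ᵥ x) := by
      rw [hGdef, Matrix.add_mulVec, one_mulVec, dotProduct_add]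
    have hxx := dot_self_nonneg x
    have hii := inv_pos.mpr hlmax_pos
    have h7 : (eigDesc hSE.1 ⟨0, by omega⟩)⁻¹ * (μ * (x ⬝ᵥ x))
        ≤ (eigDesc hSE.1 ⟨0, by omega⟩)⁻¹ * ((Ab *ᵥ x) ⬝ᵥ (Ab *ᵥ x)) :=
      mul_le_mul_of_nonneg_left h2 hii.le
    rw [h6, h3]
    nlinarith [mul_le_mul_of_nonneg_right h5 hxx, h7, h4]
  have ht_ub : bb ⬝ᵥ (G⁻¹ *ᵥ bb) ≤ ξ⁻¹ * (bb ⬝ᵥ bb) := inv_quad_upper hGpd hξpos hGquad bb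
  constructor
  · rw [hval, hcc]
    have : (1 - ξ⁻¹) * (bb ⬝ᵥ bb) = bb ⬝ᵥ bb - ξ⁻¹ * (bb ⬝ᵥ bb) := by ring
    rw [this]
    linarith
  · rw [hval]
    linarith
end

section
/- Under the factor model Σ_X = AΣ_ZAᵀ + Σ_E with all matrices as below, the effective rank r_K(Σ_X) = (Σ_{i>K} λ_i(Σ_X))/λ_{K+1}(Σ_X) satisfies r_K(Σ_X) ≥ r_e(Σ_E) − K, where r_e(Σ_E) = tr(Σ_E)/‖Σ_E‖. -/
open Matrix

section helpers
variable {n : ℕ} {M : Matrix (Fin n) (Fin n) ℝ}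

lemma eig_le_eigDesc_zero (hM : M.IsHermitian) (hn : 0 < n) (j : Fin n) :
    hM.eigenvalues j ≤ eigDesc hM ⟨0, hn⟩ := by
  have h1 : hM.eigenvalues j
      = (hM.eigenvalues ∘ Tuple.sort hM.eigenvalues) ((Tuple.sort hM.eigenvalues)⁻¹ j) := by simp
  rw [h1]
  apply Tuple.monotone_sort
  have : ((⟨0, hn⟩ : Fin n).rev : ℕ) = n - 1 := by simp [Fin.rev]
  rw [Fin.le_def, this]
  omega

lemma sum_eigDesc (hM : M.IsHermitian) : ∑ i, eigDesc hM i = M.trace := by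
  have h1 : ∑ i, eigDesc hM i = ∑ i, hM.eigenvalues i := by
    calc ∑ i, eigDesc hM i
        = ∑ i, hM.eigenvalues ((Fin.revPerm.trans (Tuple.sort hM.eigenvalues)) i) := rfl
      _ = ∑ j, hM.eigenvalues j := Equiv.sum_comp _ _
  rw [h1]
  have hs := hM.spectral_theorem
  have hdiag : diagonal (RCLike.ofReal ∘ hM.eigenvalues) = diagonal hM.eigenvalues := rfl
  conv_rhs => rw [hs, hdiag, Unitary.conjStarAlgAut_apply, Matrix.trace_mul_cycle]
  rw [show (star (hM.eigenvectorUnitary : Matrix (Fin n) (Fin n) ℝ)) *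
    (hM.eigenvectorUnitary : Matrix (Fin n) (Fin n) ℝ) = 1 from Unitary.coe_star_mul_self _,
    one_mul, Matrix.trace_diagonal]

lemma eigDesc_zero_pos (hPSD : M.PosSemidef) (hne : M ≠ 0) (hn : 0 < n) :
    0 < eigDesc hPSD.1 ⟨0, hn⟩ := by
  by_contra hcon
  push_neg at hcon
  have hall : ∀ i, hPSD.1.eigenvalues i = 0 := fun i =>
    le_antisymm ((eig_le_eigDesc_zero hPSD.1 hn i).trans hcon) (hPSD.eigenvalues_nonneg i)
  apply hne
  have hMeq : M = (hPSD.1.eigenvectorUnitary : Matrix (Fin n) (Fin n) ℝ) *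
      diagonal hPSD.1.eigenvalues * star (hPSD.1.eigenvectorUnitary : Matrix (Fin n) (Fin n) ℝ) :=
    hPSD.1.spectral_theorem
  rw [hMeq, show diagonal hPSD.1.eigenvalues = 0 by
    rw [show hPSD.1.eigenvalues = fun _ => (0:ℝ) from funext hall, diagonal_zero]]
  simp

/-- Rayleigh-type upper bound. -/
lemma quad_le_of_eig_le (hM : M.IsHermitian) {L : ℝ} (hL : ∀ i, hM.eigenvalues i ≤ L)
    (x : Fin n → ℝ) : x ⬝ᵥ (M *ᵥ x) ≤ L * (x ⬝ᵥ x) := by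
  classical
  set U : Matrix (Fin n) (Fin n) ℝ := (hM.eigenvectorUnitary : Matrix (Fin n) (Fin n) ℝ) with hU
  have hUU : U * star U = 1 := Unitary.coe_mul_star_self _
  have hN : (L • (1 : Matrix (Fin n) (Fin n) ℝ) - M).PosSemidef := by
    have hdiag : ((Matrix.diagonal (fun i => L - hM.eigenvalues i)).PosSemidef) :=
      Matrix.PosSemidef.diagonal (fun i => by simpa using hL i)
    have := hdiag.mul_mul_conjTranspose_same U
    have heq : U * diagonal (fun i => L - hM.eigenvalues i) * Uᴴ
        = L • (1 : Matrix (Fin n) (Fin n) ℝ) - M := by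
      have hd2 : diagonal (fun i => L - hM.eigenvalues i)
          = L • (1 : Matrix (Fin n) (Fin n) ℝ) - diagonal hM.eigenvalues := by
        ext i j
        by_cases h : i = j
        · subst h; simp
        · simp [Matrix.diagonal_apply_ne _ h, Matrix.one_apply_ne h]
      have hMeq : M = U * diagonal hM.eigenvalues * star U := hM.spectral_theorem
      have hsU : Uᴴ = star U := rfl
      rw [hd2, hsU, Matrix.mul_sub, Matrix.sub_mul, ← hMeq]
      congr 1
      rw [Matrix.mul_smul, Matrix.smul_mul, mul_one, hUU]
    rw [heq] at this
    exact this
  have h0 := hN.dotProduct_mulVec_nonneg x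
  have hstar : (star x : Fin n → ℝ) = x := by simp
  rw [hstar] at h0
  have hexp : x ⬝ᵥ ((L • (1 : Matrix (Fin n) (Fin n) ℝ) - M) *ᵥ x)
      = L * (x ⬝ᵥ x) - x ⬝ᵥ (M *ᵥ x) := by
    rw [Matrix.sub_mulVec, dotProduct_sub]
    congr 1
    rw [Matrix.smul_mulVec, Matrix.one_mulVec, dotProduct_smul, smul_eq_mul]
  rw [hexp] at h0
  linarith

lemma unitary_dotProduct {U : Matrix (Fin n) (Fin n) ℝ} (hUU : star U * U = 1)
    (a b : Fin n → ℝ) : (U *ᵥ a) ⬝ᵥ (U *ᵥ b) = a ⬝ᵥ b := by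
  rw [dotProduct_mulVec, ← Matrix.mulVec_transpose,
    show Uᵀ = star U from rfl, Matrix.mulVec_mulVec, hUU, Matrix.one_mulVec]

lemma conj_diag_entry (U N : Matrix (Fin n) (Fin n) ℝ) (j : Fin n) :
    (U *ᵥ Pi.single j 1) ⬝ᵥ (N *ᵥ (U *ᵥ Pi.single j 1)) = (star U * N * U) j j := by
  rw [Matrix.mulVec_mulVec]
  simp only [Matrix.mulVec_single_one, Matrix.col_apply, dotProduct, Matrix.mul_apply, Matrix.star_apply,
    star_trivial, mul_one]
  simp only [Finset.mul_sum, Finset.sum_mul]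
  rw [Finset.sum_comm]
  exact Finset.sum_congr rfl fun k _ => Finset.sum_congr rfl fun i _ => by ring

lemma card_filter_lt_le (c : ℕ) :
    (Finset.univ.filter fun i : Fin n => (i : ℕ) < c).card ≤ c := by
  have := Finset.card_le_card_of_injOn (f := fun i : Fin n => (i : ℕ))
    (s := Finset.univ.filter fun i : Fin n => (i : ℕ) < c) (t := Finset.range c)
    (by intro i hi; simp at hi ⊢; exact hi) (Fin.val_injective.injOn)
  simpa using this

end helpers

lemma eigDesc_K_le {p K : ℕ} (hKp : K < p)
    {B SE : Matrix (Fin p) (Fin p) ℝ}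
    (hB : B.PosSemidef) (hX : (B + SE).IsHermitian)
    (hBrank : B.rank ≤ K)
    {L : ℝ}
    (hRay : ∀ x : Fin p → ℝ, x ⬝ᵥ (SE *ᵥ x) ≤ L * (x ⬝ᵥ x))
    {U : Matrix (Fin p) (Fin p) ℝ}
    (hUU : star U * U = 1) (hUU' : U * star U = 1)
    (hdiagX : star U * (B + SE) * U = diagonal hX.eigenvalues) :
    eigDesc hX ⟨K, hKp⟩ ≤ L := by
  classical
  set f : Fin p → ℝ := hX.eigenvalues with hfdef
  set σ : Equiv.Perm (Fin p) := Tuple.sort f with hσdef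
  set v : Fin p → (Fin p → ℝ) := fun j => U *ᵥ Pi.single j 1 with hvdef
  set T : Finset (Fin p) :=
    (Finset.univ.filter (fun j : Fin p => p - 1 - K ≤ (j : ℕ))).image σ with hTdef
  have hfT : ∀ i ∈ T, eigDesc hX ⟨K, hKp⟩ ≤ f i := by
    intro i hi
    rw [hTdef, Finset.mem_image] at hi
    obtain ⟨j, hj, rfl⟩ := hi
    simp only [Finset.mem_filter, Finset.mem_univ, true_and] at hj
    show eigDesc hX ⟨K, hKp⟩ ≤ (f ∘ σ) j
    have h1 : eigDesc hX ⟨K, hKp⟩ = (f ∘ σ) (Fin.rev ⟨K, hKp⟩) := rfl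
    rw [h1]
    apply Tuple.monotone_sort f
    rw [Fin.le_def]
    simp only [Fin.rev]
    omega
  have hTcard : K + 1 ≤ T.card := by
    rw [hTdef, Finset.card_image_of_injective _ σ.injective]
    have h1 := Finset.card_filter_add_card_filter_not (s := (Finset.univ : Finset (Fin p)))
      (p := fun j : Fin p => p - 1 - K ≤ (j : ℕ))
    have h2 : (Finset.univ.filter (fun j : Fin p => ¬ (p - 1 - K ≤ (j : ℕ)))).card ≤ p - 1 - K := by
      have h3 : (Finset.univ.filter (fun j : Fin p => ¬ (p - 1 - K ≤ (j : ℕ))))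
          = (Finset.univ.filter (fun j : Fin p => (j : ℕ) < p - 1 - K)) := by
        apply Finset.filter_congr; intro i _; simp only [not_le]
      rw [h3]
      exact card_filter_lt_le _
    rw [Finset.card_univ, Fintype.card_fin] at h1
    omega
  -- linear independence of the selected eigenvector columns
  have hvfull : LinearIndependent ℝ v := by
    have hbasis : LinearIndependent ℝ (fun j : Fin p => (Pi.single j 1 : Fin p → ℝ)) := by
      have h := (Pi.basisFun ℝ (Fin p)).linearIndependent
      have he : ⇑(Pi.basisFun ℝ (Fin p)) = fun j : Fin p => (Pi.single j 1 : Fin p → ℝ) :=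
        funext fun j => by simp
      rwa [he] at h
    have hker : LinearMap.ker U.mulVecLin = ⊥ := by
      rw [LinearMap.ker_eq_bot]
      intro x y hxy
      have h1 : star U *ᵥ (U *ᵥ x) = star U *ᵥ (U *ᵥ y) := by
        change star U *ᵥ (U.mulVecLin x) = star U *ᵥ (U.mulVecLin y)
        rw [hxy]
      rwa [Matrix.mulVec_mulVec, Matrix.mulVec_mulVec, hUU, Matrix.one_mulVec,
        Matrix.one_mulVec] at h1
    have := LinearIndependent.map' hbasis U.mulVecLin hker
    exact this
  have hlinind : LinearIndependent ℝ (fun i : T => v (i : Fin p)) :=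
    hvfull.comp _ Subtype.val_injective
  set W1 : Submodule ℝ (Fin p → ℝ) :=
    Submodule.span ℝ (Set.range (fun i : T => v (i : Fin p))) with hW1def
  have hW1rank : Module.finrank ℝ W1 = T.card := by
    rw [hW1def, finrank_span_eq_card hlinind, Fintype.card_coe]
  set W2 : Submodule ℝ (Fin p → ℝ) := LinearMap.ker B.mulVecLin with hW2def
  have hW2rank : p - K ≤ Module.finrank ℝ W2 := by
    show p - K ≤ Module.finrank ℝ (LinearMap.ker B.mulVecLin)
    have h1 := LinearMap.finrank_range_add_finrank_ker B.mulVecLin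
    rw [Module.finrank_pi, Fintype.card_fin] at h1
    have h2 : Module.finrank ℝ (LinearMap.range B.mulVecLin) ≤ K := hBrank
    omega
  have hinter : W1 ⊓ W2 ≠ ⊥ := by
    intro hbot
    have hs := Submodule.finrank_sup_add_finrank_inf_eq W1 W2
    have hle : Module.finrank ℝ ↥(W1 ⊔ W2) ≤ p := by
      have := Submodule.finrank_le (W1 ⊔ W2)
      rwa [Module.finrank_pi, Fintype.card_fin] at this
    rw [hbot] at hs
    rw [finrank_bot] at hs
    omega
  obtain ⟨x, hxmem, hx0⟩ := Submodule.exists_mem_ne_zero_of_ne_bot hinter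
  have hxW1 : x ∈ W1 := hxmem.1
  have hBx : B *ᵥ x = 0 := hxmem.2
  obtain ⟨c, hc⟩ := (Submodule.mem_span_range_iff_exists_fun ℝ).mp hxW1
  set d : Fin p → ℝ := star U *ᵥ x with hddef
  have hxd : x = U *ᵥ d := by
    rw [hddef, Matrix.mulVec_mulVec, hUU', Matrix.one_mulVec]
  have hd2 : d = ∑ i : T, c i • (Pi.single (i : Fin p) 1 : Fin p → ℝ) := by
    rw [hddef, ← hc]
    have h1 : star U *ᵥ (∑ i : T, c i • v (i : Fin p))
        = ∑ i : T, c i • (star U *ᵥ v (i : Fin p)) := by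
      calc star U *ᵥ (∑ i : T, c i • v (i : Fin p))
          = (star U).mulVecLin (∑ i : T, c i • v (i : Fin p)) := rfl
        _ = ∑ i : T, c i • (star U).mulVecLin (v (i : Fin p)) := by
            rw [map_sum]
            exact Finset.sum_congr rfl fun i _ => map_smul _ _ _
        _ = ∑ i : T, c i • (star U *ᵥ v (i : Fin p)) := rfl
    rw [h1]
    refine Finset.sum_congr rfl fun i _ => ?_
    rw [hvdef]
    rw [Matrix.mulVec_mulVec, hUU, Matrix.one_mulVec]
  clear_value d
  have hdj : ∀ j ∉ T, d j = 0 := by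
    intro j hj
    rw [hd2]
    rw [Finset.sum_apply]
    apply Finset.sum_eq_zero
    intro i _
    have : (i : Fin p) ≠ j := fun h => hj (h ▸ i.2)
    simp [Pi.single_apply, this]
  have hdd0 : 0 < d ⬝ᵥ d := by
    have hdne : d ≠ 0 := by
      intro h
      apply hx0
      rw [hxd, h, Matrix.mulVec_zero]
    have hnn : 0 ≤ d ⬝ᵥ d := Finset.sum_nonneg fun j _ => mul_self_nonneg _
    rcases hnn.lt_or_eq with h | h
    · exact h
    · exact absurd (dotProduct_self_eq_zero.mp h.symm) hdne
  have hxx : x ⬝ᵥ x = d ⬝ᵥ d := by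
    rw [hxd, unitary_dotProduct hUU]
  have hXU : (B + SE) * U = U * diagonal f := by
    calc (B + SE) * U = U * (star U * (B + SE) * U) := by
          rw [← Matrix.mul_assoc, ← Matrix.mul_assoc, hUU', one_mul]
      _ = U * diagonal f := by rw [hdiagX]
  have hquadX : x ⬝ᵥ ((B + SE) *ᵥ x) = ∑ j, f j * (d j * d j) := by
    rw [hxd, Matrix.mulVec_mulVec, hXU, ← Matrix.mulVec_mulVec, unitary_dotProduct hUU]
    rw [dotProduct]
    refine Finset.sum_congr rfl fun j _ => ?_
    rw [Matrix.mulVec_diagonal]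
    ring
  have hlower : eigDesc hX ⟨K, hKp⟩ * (d ⬝ᵥ d) ≤ x ⬝ᵥ ((B + SE) *ᵥ x) := by
    rw [hquadX, dotProduct, Finset.mul_sum]
    apply Finset.sum_le_sum
    intro j _
    by_cases hj : j ∈ T
    · exact mul_le_mul_of_nonneg_right (hfT j hj) (mul_self_nonneg _)
    · rw [hdj j hj]; simp
  have hupper : x ⬝ᵥ ((B + SE) *ᵥ x) ≤ L * (d ⬝ᵥ d) := by
    rw [Matrix.add_mulVec, dotProduct_add, hBx, dotProduct_zero, zero_add, ← hxx]
    exact hRay x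
  have hfin : eigDesc hX ⟨K, hKp⟩ * (d ⬝ᵥ d) ≤ L * (d ⬝ᵥ d) := hlower.trans hupper
  exact le_of_mul_le_mul_right hfin hdd0

/-- Under the factor model `Σ_X = AΣ_ZAᵀ + Σ_E`, the effective rank
`r_K(Σ_X) = (Σ_{i>K} λ_i(Σ_X))/λ_{K+1}(Σ_X)` satisfies `r_K(Σ_X) ≥ r_e(Σ_E) − K`,
where `r_e(Σ_E) = tr(Σ_E)/‖Σ_E‖` (for a PSD matrix the operator norm is its largest
eigenvalue; with 0-based indices `i : Fin p`, `i > K` 1-based is `K ≤ i` and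
`λ_{K+1}` is `eigDesc ⟨K, _⟩`). -/
theorem stmt19 {p K : ℕ} (hKp : K < p)
    (A : Matrix (Fin p) (Fin K) ℝ)
    {SZ : Matrix (Fin K) (Fin K) ℝ} (hSZ : SZ.PosSemidef)
    {SE : Matrix (Fin p) (Fin p) ℝ} (hSE : SE.PosSemidef) (hSEne : SE ≠ 0)
    (hX : (A * SZ * Aᵀ + SE).IsHermitian)
    (hpos : 0 < eigDesc hX ⟨K, hKp⟩) :
    SE.trace / eigDesc hSE.1 ⟨0, by omega⟩ - K ≤
      (∑ i ∈ Finset.univ.filter (fun i : Fin p => K ≤ (i : ℕ)), eigDesc hX i) /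
        eigDesc hX ⟨K, hKp⟩ := by
  classical
  have hp0 : 0 < p := by omega
  set B : Matrix (Fin p) (Fin p) ℝ := A * SZ * Aᵀ with hBdef
  have hB : B.PosSemidef := by
    have := hSZ.mul_mul_conjTranspose_same A
    rwa [Matrix.conjTranspose_eq_transpose_of_trivial] at this
  have hXpsd : (B + SE).PosSemidef := hB.add hSE
  set L : ℝ := eigDesc hSE.1 ⟨0, by omega⟩ with hLdef
  have hL0 : 0 < L := eigDesc_zero_pos hSE hSEne hp0
  have hRay : ∀ x : Fin p → ℝ, x ⬝ᵥ (SE *ᵥ x) ≤ L * (x ⬝ᵥ x) :=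
    quad_le_of_eig_le hSE.1 (eig_le_eigDesc_zero hSE.1 hp0)
  set f : Fin p → ℝ := hX.eigenvalues with hfdef
  set σ : Equiv.Perm (Fin p) := Tuple.sort f with hσdef
  set U : Matrix (Fin p) (Fin p) ℝ := (hX.eigenvectorUnitary : Matrix (Fin p) (Fin p) ℝ)
    with hUdef
  have hUU : star U * U = 1 := Unitary.coe_star_mul_self _
  have hUU' : U * star U = 1 := Unitary.coe_mul_star_self _
  have hdiagX : star U * (B + SE) * U = diagonal f := by
    have := hX.conjStarAlgAut_star_eigenvectorUnitary
    simp only [Unitary.conjStarAlgAut_apply, Unitary.coe_star, star_star] at this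
    exact this
  set v : Fin p → (Fin p → ℝ) := fun j => U *ᵥ Pi.single j 1 with hvdef
  have hvv : ∀ j, v j ⬝ᵥ v j = 1 := by
    intro j
    rw [hvdef, unitary_dotProduct hUU]
    simp [dotProduct, Pi.single_apply]
  have hfq : ∀ j, f j = v j ⬝ᵥ ((B + SE) *ᵥ v j) := by
    intro j
    rw [hvdef, conj_diag_entry U (B + SE) j, hdiagX, Matrix.diagonal_apply_eq]
  have hqB : ∀ x : Fin p → ℝ, 0 ≤ x ⬝ᵥ (B *ᵥ x) := fun x => by simpa using hB.dotProduct_mulVec_nonneg x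
  have hqsplit : ∀ x : Fin p → ℝ, x ⬝ᵥ ((B + SE) *ᵥ x) = x ⬝ᵥ (B *ᵥ x) + x ⬝ᵥ (SE *ᵥ x) := by
    intro x
    rw [Matrix.add_mulVec, dotProduct_add]
  have htrB : ∑ j, v j ⬝ᵥ (B *ᵥ v j) = B.trace := by
    have h1 : ∀ j, v j ⬝ᵥ (B *ᵥ v j) = (star U * B * U) j j := fun j => conj_diag_entry U B j
    simp only [h1]
    rw [show (∑ j, (star U * B * U) j j) = (star U * B * U).trace from rfl,
      Matrix.trace_mul_cycle, hUU', one_mul]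
  -- the `K`-th eigenvalue bound (Weyl-type)
  have hBrank : B.rank ≤ K :=
    le_trans (Matrix.rank_mul_le_left _ _)
      (le_trans (Matrix.rank_mul_le_left A SZ) (by simpa using Matrix.rank_le_card_width A))
  have htK : eigDesc hX ⟨K, hKp⟩ ≤ L :=
    eigDesc_K_le hKp hB hX hBrank hRay hUU hUU' hdiagX
  -- sum bound over the top K eigenvalues
  set S1 : Finset (Fin p) := Finset.univ.filter (fun i : Fin p => (i : ℕ) < K) with hS1def
  have hτinj : Function.Injective (fun i : Fin p => σ i.rev) :=
    σ.injective.comp Fin.rev_injective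
  have heig_eq : ∀ i : Fin p, eigDesc hX i = f (σ i.rev) := fun i => rfl
  have hsum1 : ∑ i ∈ S1, eigDesc hX i ≤ B.trace + (K : ℝ) * L := by
    have hstep : ∀ i ∈ S1, eigDesc hX i ≤ v (σ i.rev) ⬝ᵥ (B *ᵥ v (σ i.rev)) + L := by
      intro i _
      rw [heig_eq, hfq, hqsplit]
      have := hRay (v (σ i.rev))
      rw [hvv] at this
      linarith
    calc ∑ i ∈ S1, eigDesc hX i
        ≤ ∑ i ∈ S1, (v (σ i.rev) ⬝ᵥ (B *ᵥ v (σ i.rev)) + L) := Finset.sum_le_sum hstep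
      _ = ∑ i ∈ S1, v (σ i.rev) ⬝ᵥ (B *ᵥ v (σ i.rev)) + S1.card * L := by
          rw [Finset.sum_add_distrib, Finset.sum_const, nsmul_eq_mul]
      _ ≤ B.trace + (K : ℝ) * L := by
          have h2 : ∑ i ∈ S1, v (σ i.rev) ⬝ᵥ (B *ᵥ v (σ i.rev))
              = ∑ j ∈ S1.image (fun i : Fin p => σ i.rev), v j ⬝ᵥ (B *ᵥ v j) := by
            rw [Finset.sum_image (fun a _ b _ h => hτinj h)]
          have h3 : ∑ j ∈ S1.image (fun i : Fin p => σ i.rev), v j ⬝ᵥ (B *ᵥ v j)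
              ≤ ∑ j, v j ⬝ᵥ (B *ᵥ v j) :=
            Finset.sum_le_sum_of_subset_of_nonneg (Finset.subset_univ _)
              (fun j _ _ => hqB _)
          have h4 : (S1.card : ℝ) ≤ (K : ℝ) := by
            exact_mod_cast card_filter_lt_le (n := p) K
          have h5 : (S1.card : ℝ) * L ≤ (K : ℝ) * L :=
            mul_le_mul_of_nonneg_right h4 hL0.le
          rw [htrB] at h3
          linarith [h2 ▸ h3]
  -- decompose the trace
  have hsplit : ∑ i ∈ S1, eigDesc hX i
      + ∑ i ∈ Finset.univ.filter (fun i : Fin p => K ≤ (i : ℕ)), eigDesc hX i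
      = B.trace + SE.trace := by
    have h1 := Finset.sum_filter_add_sum_filter_not Finset.univ
      (fun i : Fin p => (i : ℕ) < K) (eigDesc hX)
    have h2 : Finset.univ.filter (fun i : Fin p => ¬ (i : ℕ) < K)
        = Finset.univ.filter (fun i : Fin p => K ≤ (i : ℕ)) := by
      apply Finset.filter_congr
      intro i _
      simp [not_lt]
    rw [h2] at h1
    rw [h1, sum_eigDesc hX, Matrix.trace_add]
  set GS : ℝ := ∑ i ∈ Finset.univ.filter (fun i : Fin p => K ≤ (i : ℕ)), eigDesc hX i
    with hGSdef
  have hGS0 : 0 ≤ GS := Finset.sum_nonneg fun i _ => by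
    rw [heig_eq]; exact hXpsd.eigenvalues_nonneg _
  have hGSge : SE.trace - (K : ℝ) * L ≤ GS := by linarith
  have h1 : SE.trace / L - (K : ℝ) = (SE.trace - (K : ℝ) * L) / L := by
    field_simp
  calc SE.trace / L - (K : ℝ) = (SE.trace - (K : ℝ) * L) / L := h1
    _ ≤ GS / L := (div_le_div_iff_of_pos_right hL0).mpr hGSge
    _ ≤ GS / eigDesc hX ⟨K, hKp⟩ := div_le_div_of_nonneg_left hGS0 hpos htK
end
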